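/- Let a < b be reals, 𝓘 = [a,b], let h : 𝓘 → ℝ^ϰ be measurable with square-integrable components and 𝔥 = ∫_𝓘 h hᵀ dτ positive definite, and let R ∈ ℝ^{n×n} be symmetric positive definite. Then for every square-integrable x : 𝓘 → ℝ^n, ∫_𝓘 x(τ)ᵀ R x(τ) dτ ≥ vᵀ (𝔥⁻¹ ⊗ R) v, where v = ∫_𝓘 (h(τ) ⊗ I_n) x(τ) dτ ∈ ℝ^{ϰn}. -/

import Mathlib

open MeasureTheory Matrix Classical
open scoped Kronecker

/-- The Kronecker product `g ⊗ I_n` of a column vector `g ∈ ℝ^κ`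
(indexed by `κI`) with the `n × n` identity matrix. -/
noncomputable def vecKronId {κI : Type*} (g : κI → ℝ) (n : ℕ) :
    Matrix (κI × Fin n) (Fin n) ℝ :=
  fun ki j => g ki.1 * (1 : Matrix (Fin n) (Fin n) ℝ) ki.2 j

/-- The entrywise (cross-)Gram integral `∫_{[a,b]} ϕ(τ) h(τ)ᵀ dτ`. -/
noncomputable def gramOn {μI ϰI : Type*} (a b : ℝ) (ϕ : ℝ → μI → ℝ) (h : ℝ → ϰI → ℝ) :
    Matrix μI ϰI ℝ :=
  fun i j => ∫ τ in Set.Icc a b, ϕ τ i * h τ j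

/-- The positive semidefinite square root `√X` of a positive semidefinite
real matrix (junk value `0` if `X` is not positive semidefinite). -/
noncomputable def psdSqrt {m : Type*} [Fintype m] [DecidableEq m] (X : Matrix m m ℝ) :
    Matrix m m ℝ :=
  if hX : X.PosSemidef then (hX.1.eigenvectorUnitary : Matrix m m ℝ) *
    diagonal (fun i => Real.sqrt (hX.1.eigenvalues i)) * star (hX.1.eigenvectorUnitary : Matrix m m ℝ)
    else 0

private lemma l2_mul_integrable {μ : Measure ℝ} {f g : ℝ → ℝ}
    (hf : MemLp f 2 μ) (hg : MemLp g 2 μ) : Integrable (fun τ => f τ * g τ) μ := by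
  rw [← memLp_one_iff_integrable]
  have := hg.smul (r := 1) hf
  exact this

private lemma sum_swap4 {ι₁ ι₂ ι₃ ι₄ N : Type*} [Fintype ι₁] [Fintype ι₂] [Fintype ι₃]
    [Fintype ι₄] [AddCommMonoid N] (f : ι₁ → ι₂ → ι₃ → ι₄ → N) :
    ∑ k, ∑ j, ∑ k', ∑ j', f k j k' j' = ∑ j, ∑ j', ∑ k', ∑ k, f k j k' j' := by
  rw [Finset.sum_comm]
  refine Finset.sum_congr rfl fun j _ => ?_
  rw [show (∑ k, ∑ k', ∑ j', f k j k' j') = ∑ k, ∑ j', ∑ k', f k j k' j' from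
    Finset.sum_congr rfl fun k _ => Finset.sum_comm]
  rw [Finset.sum_comm]
  exact Finset.sum_congr rfl fun j' _ => Finset.sum_comm

/-- **Bessel-type least-squares integral inequality.**
For `𝔥 = ∫ h hᵀ ≻ 0` and `R ≻ 0`:
`∫ x(τ)ᵀ R x(τ) dτ ≥ vᵀ (𝔥⁻¹ ⊗ R) v` where `v = ∫ (h(τ) ⊗ Iₙ) x(τ) dτ`. -/
theorem leastSquares_integral_inequality
    (ϰ n : ℕ) (a b : ℝ) (hab : a < b)
    (h : ℝ → Fin ϰ → ℝ)
    (hhmeas : ∀ i, Measurable fun τ => h τ i)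
    (hhL2 : ∀ i, MemLp (fun τ => h τ i) 2 (volume.restrict (Set.Icc a b)))
    (𝔥 : Matrix (Fin ϰ) (Fin ϰ) ℝ) (h𝔥 : 𝔥 = gramOn a b h h) (h𝔥pd : 𝔥.PosDef)
    (R : Matrix (Fin n) (Fin n) ℝ) (hR : R.PosDef)
    (x : ℝ → Fin n → ℝ)
    (hxmeas : ∀ i, Measurable fun τ => x τ i)
    (hxL2 : ∀ i, MemLp (fun τ => x τ i) 2 (volume.restrict (Set.Icc a b)))
    (v : Fin ϰ × Fin n → ℝ)
    (hv : v = fun j => ∫ τ in Set.Icc a b, (vecKronId (h τ) n *ᵥ x τ) j) :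
    v ⬝ᵥ ((𝔥⁻¹ ⊗ₖ R) *ᵥ v) ≤ ∫ τ in Set.Icc a b, x τ ⬝ᵥ (R *ᵥ x τ) := by
  set μ : Measure ℝ := volume.restrict (Set.Icc a b) with hμ
  set V : Matrix (Fin ϰ) (Fin n) ℝ := fun k j => ∫ τ, h τ k * x τ j ∂μ with hV
  set C : Matrix (Fin ϰ) (Fin n) ℝ := 𝔥⁻¹ * V with hC
  set M : Matrix (Fin n) (Fin n) ℝ := Vᵀ * 𝔥⁻¹ * V with hM
  set p : ℝ → Fin n → ℝ := fun τ j => ∑ k, C k j * h τ k with hp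
  set e : ℝ → Fin n → ℝ := fun τ => x τ - p τ with he
  have hpL2 : ∀ j, MemLp (fun τ => p τ j) 2 μ := by
    intro j
    have := memLp_finsetSum (μ := μ) (p := 2)
      (f := fun k τ => C k j * h τ k) Finset.univ
      (fun k _ => (hhL2 k).const_mul (C k j))
    simpa [hp] using this
  have hinvT : (𝔥⁻¹)ᵀ = 𝔥⁻¹ := by
    have := h𝔥pd.isHermitian.inv.eq
    rw [← Matrix.conjTranspose_eq_transpose_of_trivial]; exact this
  have hCT : Cᵀ = Vᵀ * 𝔥⁻¹ := by rw [hC, Matrix.transpose_mul, hinvT]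
  have hdet : IsUnit 𝔥.det := h𝔥pd.det_pos.ne'.isUnit
  have hM1 : M = Vᵀ * C := by rw [hM, hC, Matrix.mul_assoc]
  have hM2 : M = Cᵀ * V := by rw [hM, hCT]
  have dot_expand : ∀ (f g : ℝ → Fin n → ℝ) (τ : ℝ),
      f τ ⬝ᵥ (R *ᵥ g τ) = ∑ j, ∑ j', R j j' * (f τ j * g τ j') := by
    intro f g τ
    simp only [dotProduct, Matrix.mulVec, dotProduct, Finset.mul_sum]
    exact Finset.sum_congr rfl fun j _ => Finset.sum_congr rfl fun j' _ => by ring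
  have dot_int : ∀ (f g : ℝ → Fin n → ℝ),
      (∀ j, MemLp (fun τ => f τ j) 2 μ) → (∀ j, MemLp (fun τ => g τ j) 2 μ) →
      Integrable (fun τ => f τ ⬝ᵥ (R *ᵥ g τ)) μ := by
    intro f g hf hg
    have hfg : (fun τ => f τ ⬝ᵥ (R *ᵥ g τ))
        = fun τ => ∑ j, ∑ j', R j j' * (f τ j * g τ j') := by
      funext τ; exact dot_expand f g τ
    rw [hfg]
    exact integrable_finset_sum _ fun j _ => integrable_finset_sum _ fun j' _ =>
      ((l2_mul_integrable (hf j) (hg j')).const_mul _)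
  have dot_val : ∀ (f g : ℝ → Fin n → ℝ),
      (∀ j, MemLp (fun τ => f τ j) 2 μ) → (∀ j, MemLp (fun τ => g τ j) 2 μ) →
      ∫ τ, f τ ⬝ᵥ (R *ᵥ g τ) ∂μ = ∑ j, ∑ j', R j j' * ∫ τ, f τ j * g τ j' ∂μ := by
    intro f g hf hg
    have h1 : (fun τ => f τ ⬝ᵥ (R *ᵥ g τ))
        = fun τ => ∑ j, ∑ j', R j j' * (f τ j * g τ j') := by
      funext τ; exact dot_expand f g τ
    rw [h1, integral_finset_sum _ (fun j _ => integrable_finset_sum _ fun j' _ =>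
      ((l2_mul_integrable (hf j) (hg j')).const_mul (R j j')))]
    refine Finset.sum_congr rfl fun j _ => ?_
    rw [integral_finset_sum _ (fun j' _ => ((l2_mul_integrable (hf j) (hg j')).const_mul _))]
    exact Finset.sum_congr rfl fun j' _ => integral_const_mul _ _
  -- scalar integral values
  have int_xp : ∀ j j', (∫ τ, x τ j * p τ j' ∂μ) = M j j' := by
    intro j j'
    have h1 : (fun τ => x τ j * p τ j') = fun τ => ∑ k, C k j' * (h τ k * x τ j) := by
      funext τ
      show x τ j * ∑ k, C k j' * h τ k = _
      rw [Finset.mul_sum]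
      exact Finset.sum_congr rfl fun k _ => by ring
    rw [h1, integral_finset_sum _ (fun k _ => (l2_mul_integrable (hhL2 k) (hxL2 j)).const_mul _)]
    simp only [integral_const_mul]
    rw [hM1]
    simp only [Matrix.mul_apply, Matrix.transpose_apply]
    exact Finset.sum_congr rfl fun k _ => mul_comm _ _
  have int_px : ∀ j j', (∫ τ, p τ j * x τ j' ∂μ) = M j j' := by
    intro j j'
    have h1 : (fun τ => p τ j * x τ j') = fun τ => ∑ k, C k j * (h τ k * x τ j') := by
      funext τ
      show (∑ k, C k j * h τ k) * x τ j' = _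
      rw [Finset.sum_mul]
      exact Finset.sum_congr rfl fun k _ => by ring
    rw [h1, integral_finset_sum _ (fun k _ => (l2_mul_integrable (hhL2 k) (hxL2 j')).const_mul _)]
    simp only [integral_const_mul]
    rw [hM2]
    simp only [Matrix.mul_apply, Matrix.transpose_apply]
    rfl
  have hCHC : Cᵀ * 𝔥 * C = M := by
    rw [hCT, hM, Matrix.mul_assoc Vᵀ, Matrix.nonsing_inv_mul 𝔥 hdet, Matrix.mul_one, hC]
    exact (Matrix.mul_assoc _ _ _).symm
  have int_pp : ∀ j j', (∫ τ, p τ j * p τ j' ∂μ) = M j j' := by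
    intro j j'
    have h1 : (fun τ => p τ j * p τ j')
        = fun τ => ∑ k, ∑ k', (C k j * C k' j') * (h τ k * h τ k') := by
      funext τ
      show (∑ k, C k j * h τ k) * ∑ k', C k' j' * h τ k' = _
      rw [Finset.sum_mul]
      refine Finset.sum_congr rfl fun k _ => ?_
      rw [Finset.mul_sum]
      exact Finset.sum_congr rfl fun k' _ => by ring
    rw [h1, integral_finset_sum _ (fun k _ => integrable_finset_sum _ fun k' _ =>
      (l2_mul_integrable (hhL2 k) (hhL2 k')).const_mul _)]
    have h2 : ∀ k k', (∫ τ, (C k j * C k' j') * (h τ k * h τ k') ∂μ)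
        = C k j * C k' j' * 𝔥 k k' := by
      intro k k'
      rw [integral_const_mul, h𝔥]
      rfl
    have h3 : ∀ k, (∫ τ, ∑ k', (C k j * C k' j') * (h τ k * h τ k') ∂μ)
        = ∑ k', C k j * C k' j' * 𝔥 k k' := by
      intro k
      rw [integral_finset_sum _ (fun k' _ =>
        (l2_mul_integrable (hhL2 k) (hhL2 k')).const_mul _)]
      exact Finset.sum_congr rfl fun k' _ => h2 k k'
    simp only [h3]
    rw [← hCHC]
    simp only [Matrix.mul_apply, Matrix.transpose_apply, Finset.sum_mul]
    rw [Finset.sum_comm]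
    exact Finset.sum_congr rfl fun k _ => Finset.sum_congr rfl fun k' _ => by ring
  -- split the residual integral
  set Q : ℝ := ∑ j, ∑ j', R j j' * M j j' with hQ
  have i1 := dot_int x x hxL2 hxL2
  have i2 := dot_int x p hxL2 hpL2
  have i3 := dot_int p x hpL2 hxL2
  have i4 := dot_int p p hpL2 hpL2
  have hee : (fun τ => e τ ⬝ᵥ (R *ᵥ e τ))
      = fun τ => x τ ⬝ᵥ (R *ᵥ x τ) - x τ ⬝ᵥ (R *ᵥ p τ) - p τ ⬝ᵥ (R *ᵥ x τ)
        + p τ ⬝ᵥ (R *ᵥ p τ) := by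
    funext τ
    show (x τ - p τ) ⬝ᵥ (R *ᵥ (x τ - p τ)) = _
    rw [Matrix.mulVec_sub, sub_dotProduct, dotProduct_sub,
      dotProduct_sub]
    ring
  have i12 : Integrable (fun τ => x τ ⬝ᵥ (R *ᵥ x τ) - x τ ⬝ᵥ (R *ᵥ p τ)) μ := i1.sub i2
  have i123 : Integrable (fun τ => x τ ⬝ᵥ (R *ᵥ x τ) - x τ ⬝ᵥ (R *ᵥ p τ)
      - p τ ⬝ᵥ (R *ᵥ x τ)) μ := i12.sub i3
  have hsplit : ∫ τ, e τ ⬝ᵥ (R *ᵥ e τ) ∂μ = (∫ τ, x τ ⬝ᵥ (R *ᵥ x τ) ∂μ) - Q := by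
    rw [hee, integral_add i123 i4, integral_sub i12 i3,
      integral_sub i1 i2, dot_val x p hxL2 hpL2, dot_val p x hpL2 hxL2,
      dot_val p p hpL2 hpL2]
    simp only [int_xp, int_px, int_pp, ← hQ]
    ring
  have hnn : 0 ≤ ∫ τ, e τ ⬝ᵥ (R *ᵥ e τ) ∂μ := by
    refine integral_nonneg fun τ => ?_
    have := hR.posSemidef.dotProduct_mulVec_nonneg (e τ)
    simpa using this
  -- identify the LHS with Q
  have hvV : v = fun kj => V kj.1 kj.2 := by
    funext kj
    obtain ⟨k, j⟩ := kj
    rw [hv]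
    have hterm : ∀ τ, (vecKronId (h τ) n *ᵥ x τ) (k, j) = h τ k * x τ j := by
      intro τ
      simp [vecKronId, Matrix.mulVec, dotProduct, Matrix.one_apply, ite_mul, mul_ite,
        mul_assoc]
    simp only [hterm]
    rfl
  have hLHS : v ⬝ᵥ ((𝔥⁻¹ ⊗ₖ R) *ᵥ v) = Q := by
    rw [hvV, hQ]
    simp only [dotProduct, Matrix.mulVec, Matrix.kroneckerMap_apply, Fintype.sum_prod_type,
      hM, Matrix.mul_apply, Matrix.transpose_apply, Finset.sum_mul, Finset.mul_sum]
    rw [sum_swap4 (fun k j k' j' => V k j * ((𝔥⁻¹ k k' * R j j') * V k' j'))]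
    refine Finset.sum_congr rfl fun j _ => Finset.sum_congr rfl fun j' _ =>
      Finset.sum_congr rfl fun k' _ => Finset.sum_congr rfl fun k _ => by ring
  rw [hLHS]
  linarith [hsplit ▸ hnn]
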